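/- For N×N real matrices A, the set {A : Tr[(I + A∘A)^N] = N} is closed in ℝ^{N×N}, and it is exactly the set of matrices whose support digraph is acyclic. -/

import Mathlib

open scoped Matrix

/-- The support digraph of `A` has a directed cycle of length `k`. -/
def hasCycleOfLength {N : ℕ} (A : Matrix (Fin N) (Fin N) ℝ) (k : ℕ) : Prop :=
  ∃ p : ℕ → Fin N, p k = p 0 ∧ ∀ m < k, A (p m) (p (m + 1)) ≠ 0

section Aux
variable {N : ℕ} {B : Matrix (Fin N) (Fin N) ℝ}

lemma aux_pow_nonneg (hB : ∀ i j, 0 ≤ B i j) (n : ℕ) :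
    ∀ i j, 0 ≤ (B ^ n) i j := by
  induction n with
  | zero => intro i j; rw [pow_zero, Matrix.one_apply]; split <;> norm_num
  | succ n ih =>
    intro i j
    rw [pow_succ, Matrix.mul_apply]
    exact Finset.sum_nonneg fun k _ => mul_nonneg (ih i k) (hB k j)

lemma aux_pow_pos (hB : ∀ i j, 0 ≤ B i j) (n : ℕ) (p : ℕ → Fin N)
    (he : ∀ m < n, B (p m) (p (m + 1)) ≠ 0) : 0 < (B ^ n) (p 0) (p n) := by
  induction n with
  | zero => rw [pow_zero, Matrix.one_apply_eq]; norm_num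
  | succ n ih =>
    have hlast : 0 < B (p n) (p (n + 1)) :=
      lt_of_le_of_ne (hB _ _) (Ne.symm (he n (Nat.lt_succ_self n)))
    have hprev : 0 < (B ^ n) (p 0) (p n) :=
      ih fun m hm => he m (hm.trans (Nat.lt_succ_self n))
    have hterm : 0 < (B ^ n) (p 0) (p n) * B (p n) (p (n + 1)) :=
      mul_pos hprev hlast
    rw [pow_succ, Matrix.mul_apply]
    calc (0 : ℝ) < (B ^ n) (p 0) (p n) * B (p n) (p (n + 1)) := hterm
      _ ≤ ∑ k, (B ^ n) (p 0) k * B k (p (n + 1)) :=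
        Finset.single_le_sum
          (f := fun k => (B ^ n) (p 0) k * B k (p (n + 1)))
          (fun k _ => mul_nonneg (aux_pow_nonneg hB n _ _) (hB _ _))
          (Finset.mem_univ (p n))

lemma aux_walk_of_ne (n : ℕ) :
    ∀ i j : Fin N, (B ^ n) i j ≠ 0 →
      ∃ p : ℕ → Fin N, p 0 = i ∧ p n = j ∧ ∀ m < n, B (p m) (p (m + 1)) ≠ 0 := by
  induction n with
  | zero =>
    intro i j h
    rw [pow_zero, Matrix.one_apply] at h
    refine ⟨fun _ => i, rfl, ?_, fun m hm => absurd hm (Nat.not_lt_zero m)⟩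
    by_contra hij
    simp only at hij
    exact h (by simp [hij])
  | succ n ih =>
    intro i j h
    rw [pow_succ, Matrix.mul_apply] at h
    obtain ⟨k, -, hk⟩ := Finset.exists_ne_zero_of_sum_ne_zero h
    have h1 : (B ^ n) i k ≠ 0 := fun h0 => hk (by rw [h0, zero_mul])
    have h2 : B k j ≠ 0 := fun h0 => hk (by rw [h0, mul_zero])
    obtain ⟨p, hp0, hpn, hpe⟩ := ih i k h1
    refine ⟨fun m => if m ≤ n then p m else j, by simpa using hp0, by simp, ?_⟩
    intro m hm
    rcases Nat.lt_succ_iff_lt_or_eq.mp hm with hm' | hm'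
    · simpa [Nat.le_of_lt hm', Nat.succ_le_of_lt hm'] using hpe m hm'
    · subst hm'
      simpa [hpn] using h2

end Aux

lemma aux_cycle_iff_diag {N : ℕ} (A : Matrix (Fin N) (Fin N) ℝ) (b : ℕ) :
    hasCycleOfLength A b ↔ ∃ i, ((A ⊙ A) ^ b) i i ≠ 0 := by
  have hB : ∀ i j, 0 ≤ (A ⊙ A) i j := fun i j => by
    rw [Matrix.hadamard_apply]; exact mul_self_nonneg _
  constructor
  · rintro ⟨p, hc, he⟩
    refine ⟨p 0, ?_⟩
    have := aux_pow_pos hB b p (fun m hm => by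
      rw [Matrix.hadamard_apply]
      exact mul_self_ne_zero.mpr (he m hm))
    rw [hc] at this
    exact ne_of_gt this
  · rintro ⟨i, hi⟩
    obtain ⟨p, hp0, hpb, hpe⟩ := aux_walk_of_ne b i i hi
    refine ⟨p, by rw [hp0, hpb], fun m hm => ?_⟩
    have := hpe m hm
    rw [Matrix.hadamard_apply] at this
    exact mul_self_ne_zero.mp this

lemma aux_trace_zero_iff {N : ℕ} (A : Matrix (Fin N) (Fin N) ℝ) (b : ℕ) :
    Matrix.trace ((A ⊙ A) ^ b) = 0 ↔ ¬ hasCycleOfLength A b := by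
  have hB : ∀ i j, 0 ≤ (A ⊙ A) i j := fun i j => by
    rw [Matrix.hadamard_apply]; exact mul_self_nonneg _
  rw [aux_cycle_iff_diag]
  simp only [Matrix.trace, Matrix.diag]
  rw [Finset.sum_eq_zero_iff_of_nonneg (fun i _ => aux_pow_nonneg hB b i i)]
  push_neg
  simp

lemma aux_reduce {N : ℕ} (A : Matrix (Fin N) (Fin N) ℝ) (k : ℕ) (hk : 1 ≤ k)
    (h : hasCycleOfLength A k) : ∃ b, 1 ≤ b ∧ b ≤ N ∧ hasCycleOfLength A b := by
  obtain ⟨p, hc, he⟩ := h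
  by_cases hkN : k ≤ N
  · exact ⟨k, hk, hkN, p, hc, he⟩
  · push_neg at hkN
    have hninj : ¬ Function.Injective (fun m : Fin (N + 1) => p m) := by
      intro hinj
      have := Fintype.card_le_of_injective _ hinj
      simp at this
    rw [Function.not_injective_iff] at hninj
    obtain ⟨a, b, hab, hne⟩ := hninj
    -- wlog a < b
    obtain ⟨i, j, hij, hpij⟩ : ∃ i j : Fin (N + 1), i < j ∧ p i = p j := by
      rcases lt_or_gt_of_ne hne with h' | h'
      · exact ⟨a, b, h', hab⟩
      · exact ⟨b, a, h', hab.symm⟩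
    refine ⟨(j : ℕ) - (i : ℕ), ?_, ?_, fun m => p ((i : ℕ) + m), ?_, ?_⟩
    · omega
    · have := j.isLt; omega
    · have h3 : (i : ℕ) + ((j : ℕ) - (i : ℕ)) = (j : ℕ) := by omega
      show p ((i : ℕ) + ((j : ℕ) - (i : ℕ))) = p ((i : ℕ) + 0)
      rw [h3]; simp only [Nat.add_zero]
      exact hpij.symm
    · intro m hm
      have : (i : ℕ) + m < k := by have := j.isLt; omega
      have h2 := he ((i : ℕ) + m) this
      simpa [Nat.add_assoc] using h2

lemma aux_key {N : ℕ} (A : Matrix (Fin N) (Fin N) ℝ) :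
    Matrix.trace ((1 + A ⊙ A) ^ N) = (N : ℝ) ↔
      ¬ ∃ k, 1 ≤ k ∧ hasCycleOfLength A k := by
  set B := A ⊙ A with hBdef
  have hB : ∀ i j, 0 ≤ B i j := fun i j => by
    rw [hBdef, Matrix.hadamard_apply]; exact mul_self_nonneg _
  have htr_nonneg : ∀ b : ℕ, 0 ≤ Matrix.trace (B ^ b) := fun b =>
    Finset.sum_nonneg fun i _ => aux_pow_nonneg hB b i i
  have hexp : Matrix.trace ((1 + B) ^ N) =
      ∑ mb ∈ Finset.HasAntidiagonal.antidiagonal N, N.choose mb.1 • Matrix.trace (B ^ mb.2) := by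
    rw [(Commute.one_left B).add_pow', Matrix.trace_sum]
    refine Finset.sum_congr rfl fun mb _ => ?_
    rw [one_pow, one_mul, Matrix.trace_smul]
  have hmem : ((N, 0) : ℕ × ℕ) ∈ Finset.HasAntidiagonal.antidiagonal N := by
    simp [Finset.mem_antidiagonal]
  have hsplit : (∑ mb ∈ Finset.HasAntidiagonal.antidiagonal N, N.choose mb.1 • Matrix.trace (B ^ mb.2)) =
      (N : ℝ) + ∑ mb ∈ (Finset.HasAntidiagonal.antidiagonal N).erase (N, 0),
        N.choose mb.1 • Matrix.trace (B ^ mb.2) := by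
    rw [← Finset.add_sum_erase _ _ hmem]
    congr 1
    simp [Matrix.trace_one]
  have step1 : Matrix.trace ((1 + B) ^ N) = (N : ℝ) ↔
      (∑ mb ∈ (Finset.HasAntidiagonal.antidiagonal N).erase (N, 0),
        N.choose mb.1 • Matrix.trace (B ^ mb.2)) = 0 := by
    rw [hexp, hsplit, add_eq_left]
  have step2 : (∑ mb ∈ (Finset.HasAntidiagonal.antidiagonal N).erase (N, 0),
        N.choose mb.1 • Matrix.trace (B ^ mb.2)) = 0 ↔
      ∀ mb ∈ (Finset.HasAntidiagonal.antidiagonal N).erase (N, 0),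
        N.choose mb.1 • Matrix.trace (B ^ mb.2) = 0 :=
    Finset.sum_eq_zero_iff_of_nonneg fun mb _ => nsmul_nonneg (htr_nonneg _) _
  have step3 : (∀ mb ∈ (Finset.HasAntidiagonal.antidiagonal N).erase (N, 0),
        N.choose mb.1 • Matrix.trace (B ^ mb.2) = 0) ↔
      ∀ b : ℕ, 1 ≤ b → b ≤ N → Matrix.trace (B ^ b) = 0 := by
    constructor
    · intro h b hb1 hbN
      have hmem' : (N - b, b) ∈ (Finset.HasAntidiagonal.antidiagonal N).erase (N, 0) := by
        rw [Finset.mem_erase, Finset.HasAntidiagonal.mem_antidiagonal]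
        constructor
        · intro hcontra
          have : b = 0 := by simpa using congrArg Prod.snd hcontra
          omega
        · omega
      have h2 := h _ hmem'
      have hch : (N.choose (N - b) : ℝ) ≠ 0 := by
        have := Nat.choose_pos (show N - b ≤ N by omega)
        exact_mod_cast this.ne'
      rw [nsmul_eq_mul] at h2
      rcases mul_eq_zero.mp h2 with h3 | h3
      · exact absurd h3 hch
      · exact h3
    · intro h mb hmb
      rw [Finset.mem_erase, Finset.HasAntidiagonal.mem_antidiagonal] at hmb
      have hb1 : 1 ≤ mb.2 := by
        rcases Nat.eq_zero_or_pos mb.2 with h0 | h1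
        · exfalso
          apply hmb.1
          have : mb.1 = N := by omega
          exact Prod.ext this h0
        · exact h1
      rw [h mb.2 hb1 (by omega)]
      simp
  rw [step1, step2, step3]
  constructor
  · intro h hex
    obtain ⟨k, hk, hcyc⟩ := hex
    obtain ⟨b, hb1, hbN, hcb⟩ := aux_reduce A k hk hcyc
    exact (aux_trace_zero_iff A b).mp (h b hb1 hbN) hcb
  · intro h b hb1 _
    exact (aux_trace_zero_iff A b).mpr fun hcb => h ⟨b, hb1, hcb⟩

lemma aux_cont {N : ℕ} :
    Continuous fun A : Matrix (Fin N) (Fin N) ℝ =>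
      Matrix.trace ((1 + A ⊙ A) ^ N) := by
  apply Continuous.matrix_trace
  apply Continuous.pow
  apply Continuous.add continuous_const
  apply continuous_matrix
  intro i j
  have h1 : Continuous fun A : Matrix (Fin N) (Fin N) ℝ => A i j :=
    (continuous_apply j).comp (continuous_apply i)
  simpa only [Matrix.hadamard_apply] using (show Continuous fun A : Matrix (Fin N) (Fin N) ℝ => A i j * A i j from h1.mul h1)

theorem stmt_13 {N : ℕ} :
    IsClosed {A : Matrix (Fin N) (Fin N) ℝ |
      Matrix.trace ((1 + A ⊙ A) ^ N) = (N : ℝ)} ∧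
    {A : Matrix (Fin N) (Fin N) ℝ |
        Matrix.trace ((1 + A ⊙ A) ^ N) = (N : ℝ)}
      = {A | ¬ ∃ k, 1 ≤ k ∧ hasCycleOfLength A k} := by
  constructor
  · exact isClosed_eq aux_cont continuous_const
  · ext A
    simpa using aux_key A
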